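/- Let F : ℕ → ℤ satisfy F 0 = 0, F 1 = 1, F (n+2) = -2 F (n+1) + 2 F n. Then for all n, as real numbers: F(n+1)^2 = (2^n / 6) * ((2+√3)^{n+1} + (2-√3)^{n+1} + 2*(-1)^n). -/
import Mathlib


theorem stmt_4 (F : ℕ → ℤ) (h0 : F 0 = 0) (h1 : F 1 = 1)
    (hrec : ∀ n, F (n+2) = -2 * F (n+1) + 2 * F n) :
    ∀ n : ℕ, ((F (n+1) : ℝ))^2 =
      (2^n / 6) * ((2 + Real.sqrt 3)^(n+1) + (2 - Real.sqrt 3)^(n+1) + 2 * (-1)^n) := by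
  set s : ℝ := Real.sqrt 3 with hs
  have hs2 : s ^ 2 = 3 := Real.sq_sqrt (by norm_num)
  have hspos : (0:ℝ) < s := Real.sqrt_pos.mpr (by norm_num)
  have hsne : s ≠ 0 := ne_of_gt hspos
  set α : ℝ := -1 + s
  set β : ℝ := -1 - s
  have hα : α ^ 2 = -2 * α + 2 := by simp only [α]; nlinarith [hs2]
  have hβ : β ^ 2 = -2 * β + 2 := by simp only [β]; nlinarith [hs2]
  -- Binet formula
  have key : ∀ n : ℕ, (F n : ℝ) = (α ^ n - β ^ n) / (2 * s) ∧
      (F (n+1) : ℝ) = (α ^ (n+1) - β ^ (n+1)) / (2 * s) := by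
    intro n
    induction n with
    | zero =>
      constructor
      · simp [h0]
      · rw [h1]
        field_simp [α, β]
        ring
    | succ k ih =>
      refine ⟨ih.2, ?_⟩
      rw [hrec k]
      push_cast
      rw [ih.1, ih.2]
      have e1 : α ^ (k+2) = α ^ k * (-2 * α + 2) := by rw [← hα]; ring
      have e2 : β ^ (k+2) = β ^ k * (-2 * β + 2) := by rw [← hβ]; ring
      rw [e1, e2]
      field_simp
      ring
  intro n
  have hF := (key n).2
  rw [hF]
  have hA : (α ^ (n+1)) ^ 2 = 2 ^ (n+1) * (2 - s) ^ (n+1) := by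
    rw [← pow_mul, mul_comm (n+1) 2, pow_mul, ← mul_pow]
    congr 1
    simp only [α]; nlinarith [hs2]
  have hB : (β ^ (n+1)) ^ 2 = 2 ^ (n+1) * (2 + s) ^ (n+1) := by
    rw [← pow_mul, mul_comm (n+1) 2, pow_mul, ← mul_pow]
    congr 1
    simp only [β]; nlinarith [hs2]
  have hAB : α ^ (n+1) * β ^ (n+1) = -((-1) ^ n * 2 ^ (n+1)) := by
    rw [← mul_pow]
    have : α * β = -2 := by simp only [α, β]; nlinarith [hs2]
    rw [this]
    have : (-2 : ℝ) = (-1) * 2 := by norm_num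
    rw [this, mul_pow, pow_succ (-1 : ℝ) n]
    ring
  have h12 : (2 * s) ^ 2 = 12 := by rw [mul_pow, hs2]; norm_num
  rw [div_pow, h12]
  rw [div_eq_iff (by norm_num : (12:ℝ) ≠ 0)]
  have expand : (α ^ (n+1) - β ^ (n+1)) ^ 2 =
      (α ^ (n+1)) ^ 2 + (β ^ (n+1)) ^ 2 - 2 * (α ^ (n+1) * β ^ (n+1)) := by ring
  rw [expand, hA, hB, hAB, pow_succ (2:ℝ) n]
  ring
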